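/- Let F be a locally free sheaf on P^n (n ≥ 2). If for every p with 1 ≤ p ≤ n-1 and every a ∈ ℤ, multiplication by a nonzero linear form h: H^p(F(a-1)) → H^p(F(a)) is injective, then H^p(F(a)) = 0 for all 1 ≤ p ≤ n-1 and all a ∈ ℤ. -/
import Mathlib

/-- Let `F` be locally free on `Pⁿ` (`n ≥ 2`).  Here `H p a` denotes the
cohomology `H^p(Pⁿ, F(a))` and `hmul p a : H^p(F(a-1)) → H^p(F(a))` is multiplication by a
nonzero linear form `h`.  If these maps are injective for all `1 ≤ p ≤ n-1` and all `a`,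
then (using Serre vanishing `H^p(F(a)) = 0` for `a` large, `1 ≤ p ≤ n-1`, included as a
hypothesis per the context) `H^p(F(a)) = 0` for all `1 ≤ p ≤ n-1` and all `a`. -/
theorem stmt_4 (k : Type) [Field k] (n : ℕ) (hn : 2 ≤ n)
    (H : ℕ → ℤ → ModuleCat k)                           -- H p a = H^p(Pⁿ, F(a))
    (hmul : ∀ (p : ℕ) (a : ℤ), H p (a - 1) ⟶ H p a)     -- multiplication by h
    (hinj : ∀ (p : ℕ) (a : ℤ), 1 ≤ p → p ≤ n - 1 → Function.Injective ⇑(hmul p a))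
    (hserre : ∀ p : ℕ, 1 ≤ p → p ≤ n - 1 → ∃ a₀ : ℤ, ∀ a ≥ a₀, Subsingleton (H p a)) :
    ∀ (p : ℕ) (a : ℤ), 1 ≤ p → p ≤ n - 1 → Subsingleton (H p a) := by
  intro p a hp1 hp2
  obtain ⟨a₀, h₀⟩ := hserre p hp1 hp2
  have key : ∀ m : ℕ, Subsingleton (H p (a₀ - m)) := by
    intro m
    induction m with
    | zero => simpa using h₀ a₀ le_rfl
    | succ m ih =>
      have hinj' := hinj p (a₀ - m) hp1 hp2
      have : (a₀ : ℤ) - (m + 1 : ℕ) = (a₀ - m) - 1 := by push_cast; ring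
      rw [this]
      haveI := ih
      constructor
      intro x y
      exact hinj' (Subsingleton.elim _ _)
  rcases le_or_gt a₀ a with h | h
  · exact h₀ a h
  · have : a = a₀ - ((a₀ - a).toNat : ℤ) := by omega
    rw [this]; exact key _
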